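/- Under the L2-regularized structured prediction setting with structural complexity regularization strength α (f minimizing the full objective, f^{∖i′} minimizing the objective with one mini-sample loss omitted, all loss terms convex differentiable, the removed loss being a sum of n/α τ-Lipschitz compositions of ρ-admissible evaluation functionals, mini-sample feature norm bounded by nv√d/α and full-sample feature norm bounded by nv√d), if moreover the point-wise loss at any test position is ℓ_τ(g, z, k) = c_τ(E_{x,k}(g), y_(k)) with c_τ τ-smooth and E_{x,k} ρ-admissible at x, then the loss stability is bounded by dτ²ρ²v²n²/(mλα²), i.e. |ℓ_τ(f, z, k) − ℓ_τ(f^{∖i′}, z, k)| ≤ dτ²ρ²v²n²/(mλα²) for all z and k, and the sample loss stability is bounded by dτ²ρ²v²n³/(mλα²), i.e. |L_τ(f, z) − L_τ(f^{∖i′}, z)| ≤ dτ²ρ²v²n³/(mλα²) for all z. -/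

import Mathlib

open Set Finset

lemma expand_sq' {H : Type*} [NormedAddCommGroup H] [InnerProductSpace ℝ H]
    (f g : H) (t : ℝ) :
    ‖(1-t)•f + t•g‖^2 = (1-t)*‖f‖^2 + t*‖g‖^2 - t*(1-t)*‖g-f‖^2 := by
  simp only [← real_inner_self_eq_norm_sq, inner_add_left, inner_add_right,
    inner_sub_left, inner_sub_right, real_inner_smul_left, real_inner_smul_right]
  rw [real_inner_comm g f]
  ring

lemma strong_min' {H : Type*} [NormedAddCommGroup H] [InnerProductSpace ℝ H]
    (C : H → ℝ) (hC : ConvexOn ℝ univ C) (lam : ℝ) (hlam : 0 < lam)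
    (f : H) (hf : ∀ g, C f + lam/2 * ‖f‖^2 ≤ C g + lam/2 * ‖g‖^2) :
    ∀ g, C f + lam/2 * ‖f‖^2 + lam/2 * ‖g - f‖^2 ≤ C g + lam/2 * ‖g‖^2 := by
  intro g
  by_contra hcon
  push_neg at hcon
  set K : ℝ := lam/2 * ‖g - f‖^2 with hK
  have hK0 : 0 ≤ K := by positivity
  set δ : ℝ := (C f + lam/2 * ‖f‖^2 + K) - (C g + lam/2 * ‖g‖^2) with hδ
  have hδ0 : 0 < δ := by simp only [hδ]; linarith
  set t : ℝ := δ / (K + δ) with ht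
  have htpos : 0 < t := by positivity
  have ht1 : t ≤ 1 := by
    rw [ht, div_le_one (by linarith)]; linarith
  have hcvx := hC.2 (Set.mem_univ f) (Set.mem_univ g) (by linarith : (0:ℝ) ≤ 1 - t)
    (le_of_lt htpos) (by ring)
  have hmin := hf ((1-t)•f + t•g)
  rw [expand_sq'] at hmin
  simp only [smul_eq_mul] at hcvx
  have h6 : C f + lam/2*‖f‖^2
      ≤ (1-t)*C f + t*C g + lam/2*((1-t)*‖f‖^2 + t*‖g‖^2 - t*(1-t)*‖g-f‖^2) :=
    le_trans hmin (by linarith)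
  have h7 : 0 ≤ t*(t*K - δ) := by
    have e : t*(t*K - δ)
        = ((1-t)*C f + t*C g + lam/2*((1-t)*‖f‖^2 + t*‖g‖^2 - t*(1-t)*‖g-f‖^2))
          - (C f + lam/2*‖f‖^2) := by
      rw [hδ, hK]; ring
    rw [e]; linarith
  have hkey : δ ≤ t * K := by nlinarith
  have hlt : t * K < δ := by
    rw [ht]
    rcases eq_or_lt_of_le hK0 with h0 | h0
    · rw [← h0]; simpa using hδ0
    · rw [div_mul_eq_mul_div, div_lt_iff₀ (by linarith)]
      nlinarith
  linarith


lemma convexOn_finset_sum' {ι H : Type*} [NormedAddCommGroup H] [InnerProductSpace ℝ H]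
    (t : Finset ι) (f : ι → H → ℝ) (h : ∀ i ∈ t, ConvexOn ℝ univ (f i)) :
    ConvexOn ℝ univ (fun x => ∑ i ∈ t, f i x) := by
  classical
  induction t using Finset.induction with
  | empty => simpa using convexOn_const (0:ℝ) convex_univ
  | @insert a s ha ih =>
    simp only [Finset.sum_insert ha]
    exact (h a (Finset.mem_insert_self a s)).add
      (ih fun i hi => h i (Finset.mem_insert_of_mem hi))

/-- **Loss stability and sample loss stability vs. structural complexity
regularization.**  Under the L2-regularized structured prediction setting with
structural complexity regularization strength `α`, the loss stability of the
minimizer under removal of one mini-sample is bounded by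
`d τ² ρ² v² n² / (m λ α²)` and the sample loss stability by
`d τ² ρ² v² n³ / (m λ α²)`. -/
theorem loss_stability_structural_regularization
    {H : Type*} [NormedAddCommGroup H] [InnerProductSpace ℝ H]
    {Zt Ytag : Type*}     -- test samples and gold tags
    (m n α d : ℕ) (hm : 0 < m) (hn : 0 < n) (hα : 0 < α) (hdvd : α ∣ n)
    (L : Fin (m * α) → H → ℝ)
    (hconv : ∀ j, ConvexOn ℝ univ (L j))
    (hdiff : ∀ j, Differentiable ℝ (L j))
    (lam : ℝ) (hlam : 0 < lam)
    (i' : Fin (m * α)) (f f' : H)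
    (hf : ∀ g : H,
      (1 / ((m : ℝ) * n)) * ∑ j, L j f + lam / 2 * ‖f‖ ^ 2
        ≤ (1 / ((m : ℝ) * n)) * ∑ j, L j g + lam / 2 * ‖g‖ ^ 2)
    (hf' : ∀ g : H,
      (1 / ((m : ℝ) * n)) * ∑ j ∈ univ.erase i', L j f' + lam / 2 * ‖f'‖ ^ 2
        ≤ (1 / ((m : ℝ) * n)) * ∑ j ∈ univ.erase i', L j g + lam / 2 * ‖g‖ ^ 2)
    (τ ρ v xnorm : ℝ) (hτ : 0 ≤ τ) (hρ : 0 ≤ ρ) (hv : 0 ≤ v) (hx : 0 ≤ xnorm)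
    (c : Fin (n / α) → ℝ → ℝ) (E : Fin (n / α) → H → ℝ)
    (hdecomp : ∀ g : H, L i' g = ∑ k, c k (E k g))
    (hlip : ∀ (k : Fin (n / α)) (a b : ℝ), |c k a - c k b| ≤ τ * |a - b|)
    (hadm : ∀ (k : Fin (n / α)) (g g' : H),
      |E k g - E k g'| ≤ ρ * ‖g - g'‖ * xnorm)
    (hxbound : xnorm ≤ (n : ℝ) * v * Real.sqrt d / α)
    -- the point-wise loss at a test sample `z` and position `k` is
    -- `ℓ(g, z, k) = cτ (Ev z k g) (y z k)` with `cτ` τ-smooth and `Ev z k`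
    -- ρ-admissible at the test input `x_z`, whose norm `xn z` is at most `n v √d`
    (Ev : Zt → Fin n → H → ℝ) (y : Zt → Fin n → Ytag)
    (cτ : ℝ → Ytag → ℝ)
    (hsmooth : ∀ (a b : ℝ) (t : Ytag), |cτ a t - cτ b t| ≤ τ * |a - b|)
    (xn : Zt → ℝ) (hxn0 : ∀ z, 0 ≤ xn z)
    (hxnb : ∀ z, xn z ≤ (n : ℝ) * v * Real.sqrt d)
    (hadmEv : ∀ (z : Zt) (k : Fin n) (g g' : H),
      |Ev z k g - Ev z k g'| ≤ ρ * ‖g - g'‖ * xn z) :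
    (∀ (z : Zt) (k : Fin n),
      |cτ (Ev z k f) (y z k) - cτ (Ev z k f') (y z k)|
        ≤ (d : ℝ) * τ ^ 2 * ρ ^ 2 * v ^ 2 * n ^ 2 / ((m : ℝ) * lam * α ^ 2)) ∧
    (∀ z : Zt,
      |(∑ k : Fin n, cτ (Ev z k f) (y z k)) - ∑ k : Fin n, cτ (Ev z k f') (y z k)|
        ≤ (d : ℝ) * τ ^ 2 * ρ ^ 2 * v ^ 2 * n ^ 3 / ((m : ℝ) * lam * α ^ 2)) := by
  have hm' : (0:ℝ) < m := by exact_mod_cast hm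
  have hn' : (0:ℝ) < n := by exact_mod_cast hn
  have hα' : (0:ℝ) < α := by exact_mod_cast hα
  have hmn : (0:ℝ) < (m:ℝ) * n := mul_pos hm' hn'
  -- convexity of the scaled sums
  have hCfull : ConvexOn ℝ univ (fun g : H => (1 / ((m : ℝ) * n)) * ∑ j, L j g) := by
    have hsum : ConvexOn ℝ univ (fun g : H => ∑ j, L j g) :=
      convexOn_finset_sum' _ _ (fun j _ => hconv j)
    exact hsum.smul (by positivity)
  have hCerase : ConvexOn ℝ univ
      (fun g : H => (1 / ((m : ℝ) * n)) * ∑ j ∈ univ.erase i', L j g) := by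
    have hsum : ConvexOn ℝ univ (fun g : H => ∑ j ∈ univ.erase i', L j g) :=
      convexOn_finset_sum' _ _ (fun j _ => hconv j)
    exact hsum.smul (by positivity)
  -- strong-convexity inequalities at both minimizers
  have A : (1 / ((m : ℝ) * n)) * ∑ j, L j f + lam/2 * ‖f‖^2 + lam/2 * ‖f' - f‖^2
      ≤ (1 / ((m : ℝ) * n)) * ∑ j, L j f' + lam/2 * ‖f'‖^2 :=
    strong_min' _ hCfull lam hlam f hf f'
  have B : (1 / ((m : ℝ) * n)) * ∑ j ∈ univ.erase i', L j f' + lam/2 * ‖f'‖^2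
        + lam/2 * ‖f - f'‖^2
      ≤ (1 / ((m : ℝ) * n)) * ∑ j ∈ univ.erase i', L j f + lam/2 * ‖f‖^2 :=
    strong_min' _ hCerase lam hlam f' hf' f
  have hsf : (1 / ((m : ℝ) * n)) * ∑ j, L j f
      = (1 / ((m : ℝ) * n)) * ∑ j ∈ univ.erase i', L j f
        + (1 / ((m : ℝ) * n)) * L i' f := by
    rw [← mul_add, Finset.sum_erase_add _ _ (mem_univ i')]
  have hsf' : (1 / ((m : ℝ) * n)) * ∑ j, L j f'
      = (1 / ((m : ℝ) * n)) * ∑ j ∈ univ.erase i', L j f'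
        + (1 / ((m : ℝ) * n)) * L i' f' := by
    rw [← mul_add, Finset.sum_erase_add _ _ (mem_univ i')]
  have hrev : ‖f' - f‖ = ‖f - f'‖ := norm_sub_rev _ _
  rw [hsf, hsf', hrev] at A
  have hstep : lam * ‖f - f'‖^2
      ≤ (1 / ((m : ℝ) * n)) * L i' f' - (1 / ((m : ℝ) * n)) * L i' f := by
    linarith
  -- bound on the removed-loss difference
  have hcard : ((n / α : ℕ) : ℝ) = (n : ℝ) / (α : ℝ) :=
    Nat.cast_div hdvd (by exact_mod_cast hα.ne')
  have hN0 : (0:ℝ) ≤ ‖f - f'‖ := norm_nonneg _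
  have hLdiff : L i' f' - L i' f ≤ ((n:ℝ)/α) * (τ * (ρ * ‖f - f'‖ * xnorm)) := by
    have h1 : L i' f' - L i' f ≤ |L i' f' - L i' f| := le_abs_self _
    have h2 : |L i' f' - L i' f| ≤ ((n:ℝ)/α) * (τ * (ρ * ‖f - f'‖ * xnorm)) := by
      rw [hdecomp, hdecomp, ← Finset.sum_sub_distrib]
      refine (Finset.abs_sum_le_sum_abs _ _).trans ?_
      have hterm : ∀ k : Fin (n/α), |c k (E k f') - c k (E k f)|
          ≤ τ * (ρ * ‖f - f'‖ * xnorm) := by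
        intro k
        refine (hlip k _ _).trans ?_
        have := hadm k f' f
        rw [hrev] at this
        exact mul_le_mul_of_nonneg_left this hτ
      calc ∑ k, |c k (E k f') - c k (E k f)|
          ≤ ∑ _k : Fin (n/α), τ * (ρ * ‖f - f'‖ * xnorm) :=
            Finset.sum_le_sum fun k _ => hterm k
        _ = ((n/α : ℕ) : ℝ) * (τ * (ρ * ‖f - f'‖ * xnorm)) := by
            simp [Finset.sum_const, Finset.card_fin, nsmul_eq_mul]
        _ = ((n:ℝ)/α) * (τ * (ρ * ‖f - f'‖ * xnorm)) := by rw [hcard]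
    exact h1.trans h2
  -- the norm bound
  have hnormb : ‖f - f'‖ ≤ τ * ρ * xnorm / ((m:ℝ) * lam * α) := by
    rcases eq_or_lt_of_le hN0 with h0 | h0
    · rw [← h0]; positivity
    · have hchain : lam * ‖f - f'‖^2
          ≤ (1 / ((m : ℝ) * n)) * (((n:ℝ)/α) * (τ * (ρ * ‖f - f'‖ * xnorm))) := by
        have := hstep
        have h3 : (1 / ((m : ℝ) * n)) * L i' f' - (1 / ((m : ℝ) * n)) * L i' f
            = (1 / ((m : ℝ) * n)) * (L i' f' - L i' f) := by ring
        rw [h3] at this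
        refine this.trans ?_
        exact mul_le_mul_of_nonneg_left hLdiff (by positivity)
      have heq : (1 / ((m : ℝ) * n)) * (((n:ℝ)/α) * (τ * (ρ * ‖f - f'‖ * xnorm)))
          = (τ * ρ * xnorm / ((m:ℝ) * α)) * ‖f - f'‖ := by
        field_simp
      rw [heq] at hchain
      have hsq : lam * ‖f - f'‖^2 = (lam * ‖f - f'‖) * ‖f - f'‖ := by ring
      rw [hsq] at hchain
      have hle : lam * ‖f - f'‖ ≤ τ * ρ * xnorm / ((m:ℝ) * α) :=
        le_of_mul_le_mul_right hchain h0
      have hma : (0:ℝ) < (m:ℝ) * α := mul_pos hm' hα'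
      have h5 := mul_le_mul_of_nonneg_right hle hma.le
      rw [div_mul_cancel₀ _ hma.ne'] at h5
      rw [le_div_iff₀ (by positivity)]
      calc ‖f - f'‖ * ((m:ℝ) * lam * α) = lam * ‖f - f'‖ * ((m:ℝ) * α) := by ring
        _ ≤ τ * ρ * xnorm := h5
  set X : ℝ := (n:ℝ) * v * Real.sqrt d with hX
  have hX0 : 0 ≤ X := by positivity
  have hNb : ‖f - f'‖ ≤ τ * ρ * X / ((m:ℝ) * lam * α^2) := by
    refine hnormb.trans ?_
    rw [div_le_div_iff₀ (by positivity) (by positivity)]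
    have hax : xnorm * α ≤ X := (le_div_iff₀ hα').mp hxbound
    have hmono := mul_le_mul_of_nonneg_left hax
      (show (0:ℝ) ≤ τ * ρ * ((m:ℝ) * lam * α) by positivity)
    nlinarith [hmono]
  have hD : (0:ℝ) < (m:ℝ) * lam * α^2 := by positivity
  have hs2 : Real.sqrt d * Real.sqrt d = (d:ℝ) := Real.mul_self_sqrt (by positivity)
  have hpt : ∀ (z : Zt) (k : Fin n),
      |cτ (Ev z k f) (y z k) - cτ (Ev z k f') (y z k)|
        ≤ (d : ℝ) * τ ^ 2 * ρ ^ 2 * v ^ 2 * n ^ 2 / ((m : ℝ) * lam * α ^ 2) := by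
    intro z k
    calc |cτ (Ev z k f) (y z k) - cτ (Ev z k f') (y z k)|
        ≤ τ * |Ev z k f - Ev z k f'| := hsmooth _ _ _
      _ ≤ τ * (ρ * ‖f - f'‖ * xn z) :=
          mul_le_mul_of_nonneg_left (hadmEv z k f f') hτ
      _ ≤ τ * (ρ * (τ * ρ * X / ((m:ℝ) * lam * α^2)) * X) := by
          apply mul_le_mul_of_nonneg_left _ hτ
          have hb1 : ρ * ‖f - f'‖ ≤ ρ * (τ * ρ * X / ((m:ℝ) * lam * α^2)) :=
            mul_le_mul_of_nonneg_left hNb hρ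
          have hb2 : ρ * ‖f - f'‖ * xn z ≤ ρ * (τ * ρ * X / ((m:ℝ) * lam * α^2)) * xn z :=
            mul_le_mul_of_nonneg_right hb1 (hxn0 z)
          refine hb2.trans ?_
          exact mul_le_mul_of_nonneg_left (hxnb z) (by positivity)
      _ = (d : ℝ) * τ ^ 2 * ρ ^ 2 * v ^ 2 * n ^ 2 / ((m : ℝ) * lam * α ^ 2) := by
          rw [hX]
          field_simp
          linear_combination ((τ:ℝ)^2 * ρ^2 * v^2) * hs2
  refine ⟨hpt, ?_⟩
  intro z
  calc |(∑ k : Fin n, cτ (Ev z k f) (y z k)) - ∑ k : Fin n, cτ (Ev z k f') (y z k)|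
      = |∑ k : Fin n, (cτ (Ev z k f) (y z k) - cτ (Ev z k f') (y z k))| := by
        rw [Finset.sum_sub_distrib]
    _ ≤ ∑ k : Fin n, |cτ (Ev z k f) (y z k) - cτ (Ev z k f') (y z k)| :=
        Finset.abs_sum_le_sum_abs _ _
    _ ≤ ∑ _k : Fin n, (d : ℝ) * τ ^ 2 * ρ ^ 2 * v ^ 2 * n ^ 2 / ((m : ℝ) * lam * α ^ 2) :=
        Finset.sum_le_sum fun k _ => hpt z k
    _ = (n:ℝ) * ((d : ℝ) * τ ^ 2 * ρ ^ 2 * v ^ 2 * n ^ 2 / ((m : ℝ) * lam * α ^ 2)) := by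
        simp [Finset.sum_const, Finset.card_fin, nsmul_eq_mul]
    _ = (d : ℝ) * τ ^ 2 * ρ ^ 2 * v ^ 2 * n ^ 3 / ((m : ℝ) * lam * α ^ 2) := by
        field_simp
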